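/- Let (Ω, 𝒜, P) be a probability space and D : ℝ≥0 × Ω → ℝ≥0 a stochastic process whose sample paths are almost surely nondecreasing, right-continuous, and tend to ∞ as s → ∞, and let E(t) = inf{ s ≥ 0 : D(s) > t }. Then for any s₁,…,sₙ ≥ 0 and any λ₁,…,λₙ > 0: ∫_{ℝⁿ≥0} exp(−λ₁t₁ − ⋯ − λₙtₙ) · P[E(tᵢ) > sᵢ for i = 1,…,n] dt₁⋯dtₙ = (λ₁⋯λₙ)⁻¹ · 𝔼[ exp(−λ₁D(s₁) − ⋯ − λₙD(sₙ)) ]. -/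

import Mathlib

open Filter MeasureTheory Set Topology

lemma aux_inv_gt {f : ℝ → ℝ} {s : ℝ} (hmono : MonotoneOn f (Ici 0))
    (hc : ContinuousWithinAt f (Ici s) s) (htop : Tendsto f atTop atTop)
    (hs : 0 ≤ s) {t : ℝ} (h : f s < t) :
    s < sInf {u : ℝ | 0 ≤ u ∧ t < f u} := by
  have hne : {u : ℝ | 0 ≤ u ∧ t < f u}.Nonempty := by
    obtain ⟨u, hu⟩ := ((htop.eventually (eventually_gt_atTop t)).and
      (eventually_ge_atTop (0:ℝ))).exists
    exact ⟨u, hu.2, hu.1⟩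
  have hev0 : ∀ᶠ u in 𝓝[Ici s] s, f u < t := hc (Iio_mem_nhds h)
  have hev : ∀ᶠ u in 𝓝[>] s, f u < t :=
    hev0.filter_mono (nhdsWithin_mono s Ioi_subset_Ici_self)
  obtain ⟨u, hfu, hu⟩ := (hev.and eventually_mem_nhdsWithin).exists
  have hus : s < u := hu
  have h0u : 0 ≤ u := le_trans hs hus.le
  refine lt_of_lt_of_le hus (le_csInf hne ?_)
  intro b hb
  by_contra hbu
  push_neg at hbu
  exact absurd (lt_of_le_of_lt (hmono hb.1 h0u hbu.le) hfu) (not_lt.2 hb.2.le)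

lemma aux_inv_le {f : ℝ → ℝ} {s : ℝ} (hs : 0 ≤ s) {t : ℝ} (h : t < f s) :
    sInf {u : ℝ | 0 ≤ u ∧ t < f u} ≤ s :=
  csInf_le ⟨0, fun _ hx => hx.1⟩ ⟨hs, h⟩

lemma aux_integral_exp_neg_mul_Ioi {b : ℝ} (hb : 0 < b) (c : ℝ) :
    ∫ x in Ioi c, Real.exp (-(b * x)) = b⁻¹ * Real.exp (-(b * c)) := by
  have h := integral_comp_mul_left_Ioi (fun x => Real.exp (-x)) c hb
  simp only [smul_eq_mul] at h
  calc ∫ x in Ioi c, Real.exp (-(b * x)) = b⁻¹ * ∫ x in Ioi (b*c), Real.exp (-x) := h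
    _ = b⁻¹ * Real.exp (-(b*c)) := by rw [integral_exp_neg_Ioi]

/-- Let `D` be a stochastic process on a probability space whose
sample paths are a.s. nonnegative, nondecreasing, right-continuous, and tend to `∞`,
and let `E t = inf {s ≥ 0 : D s > t}` be its inverse. Then for `s₁,…,sₙ ≥ 0` and
`λ₁,…,λₙ > 0`,
`∫_{ℝⁿ≥0} exp(−Σᵢ λᵢ tᵢ) P[E tᵢ > sᵢ, i = 1,…,n] dt = (Πᵢ λᵢ)⁻¹ 𝔼[exp(−Σᵢ λᵢ D sᵢ)]`. -/
theorem laplace_transform_tail_eq {Ω : Type*} [MeasurableSpace Ω]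
    (P : Measure Ω) [IsProbabilityMeasure P]
    (D : ℝ → Ω → ℝ) (hmeas : ∀ s : ℝ, Measurable (D s))
    (hpath : ∀ᵐ ω ∂P, MonotoneOn (fun s => D s ω) (Ici 0) ∧
      (∀ s : ℝ, 0 ≤ s → 0 ≤ D s ω) ∧
      (∀ s : ℝ, 0 ≤ s → ContinuousWithinAt (fun u => D u ω) (Ici s) s) ∧
      Tendsto (fun s => D s ω) atTop atTop)
    (E : ℝ → Ω → ℝ) (hE : ∀ t ω, E t ω = sInf {s : ℝ | 0 ≤ s ∧ t < D s ω})
    (n : ℕ) (s : Fin n → ℝ) (hs : ∀ i, 0 ≤ s i)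
    (lam : Fin n → ℝ) (hlam : ∀ i, 0 < lam i) :
    ∫ t in {t : Fin n → ℝ | ∀ i, 0 ≤ t i},
        Real.exp (-∑ i, lam i * t i) * (P {ω | ∀ i, s i < E (t i) ω}).toReal
      = (∏ i, lam i)⁻¹ * ∫ ω, Real.exp (-∑ i, lam i * D (s i) ω) ∂P := by
  classical
  have hSm : MeasurableSet {t : Fin n → ℝ | ∀ i, 0 ≤ t i} := by
    have : {t : Fin n → ℝ | ∀ i, 0 ≤ t i} = Set.pi univ (fun _ : Fin n => Ici (0:ℝ)) := by
      ext t; simp [Set.mem_univ_pi, Pi.le_def]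
    rw [this]; exact MeasurableSet.univ_pi fun _ => measurableSet_Ici
  have hwm : Measurable (fun t : Fin n → ℝ => Real.exp (-∑ i, lam i * t i)) :=
    Real.measurable_exp.comp
      (Finset.measurable_sum Finset.univ fun i _ =>
        by fun_prop).neg
  -- the measurable proxy set in the product space
  have hPRm : MeasurableSet {p : (Fin n → ℝ) × Ω | ∀ i, D (s i) p.2 < p.1 i} := by
    have : {p : (Fin n → ℝ) × Ω | ∀ i, D (s i) p.2 < p.1 i}
        = ⋂ i, {p : (Fin n → ℝ) × Ω | D (s i) p.2 < p.1 i} := by ext p; simp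
    rw [this]
    exact MeasurableSet.iInter fun i =>
      measurableSet_lt ((hmeas (s i)).comp measurable_snd)
        ((measurable_pi_apply i).comp measurable_fst)
  have hgm : Measurable (fun t : Fin n → ℝ => P {ω | ∀ i, D (s i) ω < t i}) := by
    have : (fun t : Fin n → ℝ => P {ω | ∀ i, D (s i) ω < t i})
        = fun t => P (Prod.mk t ⁻¹' {p : (Fin n → ℝ) × Ω | ∀ i, D (s i) p.2 < p.1 i}) := rfl
    rw [this]; exact measurable_measure_prodMk_left hPRm
  -- sandwich at each time point
  have hg_le_f : ∀ t : Fin n → ℝ,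
      P {ω | ∀ i, D (s i) ω < t i} ≤ P {ω | ∀ i, s i < E (t i) ω} := by
    intro t
    refine measure_mono_ae ?_
    filter_upwards [hpath] with ω hω hmem i
    obtain ⟨hm, hnn, hrc, htop⟩ := hω
    rw [hE]
    exact aux_inv_gt hm (hrc (s i) (hs i)) htop (hs i) (hmem i)
  have hf_le_gle : ∀ t : Fin n → ℝ,
      P {ω | ∀ i, s i < E (t i) ω} ≤ P {ω | ∀ i, D (s i) ω ≤ t i} := by
    intro t
    refine measure_mono_ae ?_
    filter_upwards [hpath] with ω hω hmem i
    by_contra hlt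
    push_neg at hlt
    have h2 := hmem i
    rw [hE] at h2
    exact absurd h2 (not_lt.2 (aux_inv_le (f := fun u => D u ω) (hs i) hlt))
  -- a.e. (in t) the two proxies agree
  have hae_gle : ∀ᵐ t : Fin n → ℝ,
      P {ω | ∀ i, D (s i) ω ≤ t i} = P {ω | ∀ i, D (s i) ω < t i} := by
    have hBc : ∀ i, Set.Countable {x : ℝ | 0 < P {ω | D (s i) ω = x}} := fun i =>
      Measure.countable_meas_level_set_pos (hmeas (s i))
    have hNnull : (volume : Measure (Fin n → ℝ))
        (⋃ i, (fun t : Fin n → ℝ => t i) ⁻¹' {x : ℝ | 0 < P {ω | D (s i) ω = x}}) = 0 := by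
      refine measure_iUnion_null fun i => ?_
      have hpre : (fun t : Fin n → ℝ => t i) ⁻¹' {x : ℝ | 0 < P {ω | D (s i) ω = x}}
          = Set.pi univ (fun j => if j = i then {x : ℝ | 0 < P {ω | D (s i) ω = x}} else univ) := by
        ext t
        simp only [mem_preimage, Set.mem_univ_pi]
        constructor
        · intro h j
          by_cases hj : j = i
          · subst hj; simpa using h
          · simp [hj]
        · intro h
          simpa using h i
      rw [hpre, volume_pi_pi]
      refine Finset.prod_eq_zero (Finset.mem_univ i) ?_
      simp only [if_pos rfl]
      exact Set.Countable.measure_zero (hBc i) _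
    have hcompl := (MeasureTheory.measure_eq_zero_iff_ae_notMem).1 hNnull
    filter_upwards [hcompl] with t ht
    simp only [mem_iUnion, mem_preimage, mem_setOf_eq, not_exists, not_lt,
      nonpos_iff_eq_zero] at ht
    refine le_antisymm ?_ (measure_mono fun ω hω i => (hω i).le)
    have hsub : {ω | ∀ i, D (s i) ω ≤ t i}
        ⊆ {ω | ∀ i, D (s i) ω < t i} ∪ ⋃ i, {ω | D (s i) ω = t i} := by
      intro ω hω
      by_cases hlt : ∀ i, D (s i) ω < t i
      · exact Or.inl hlt
      · push_neg at hlt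
        obtain ⟨i, hi⟩ := hlt
        exact Or.inr (mem_iUnion.2 ⟨i, le_antisymm (hω i) hi⟩)
    calc P {ω | ∀ i, D (s i) ω ≤ t i}
        ≤ P ({ω | ∀ i, D (s i) ω < t i} ∪ ⋃ i, {ω | D (s i) ω = t i}) := measure_mono hsub
      _ ≤ P {ω | ∀ i, D (s i) ω < t i} + P (⋃ i, {ω | D (s i) ω = t i}) := measure_union_le _ _
      _ = P {ω | ∀ i, D (s i) ω < t i} := by
          rw [measure_iUnion_null fun i => ht i, add_zero]
  -- a.e. (restricted) identification of the integrand's measure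
  have hfg : ∀ᵐ t ∂((volume : Measure (Fin n → ℝ)).restrict {t : Fin n → ℝ | ∀ i, 0 ≤ t i}),
      P {ω | ∀ i, s i < E (t i) ω} = P {ω | ∀ i, D (s i) ω < t i} := by
    filter_upwards [ae_restrict_of_ae hae_gle] with t ht
    exact le_antisymm (le_trans (hf_le_gle t) ht.le) (hg_le_f t)
  -- rewrite the LHS with the proxy measure
  have hLHS1 : ∫ t in {t : Fin n → ℝ | ∀ i, 0 ≤ t i},
        Real.exp (-∑ i, lam i * t i) * (P {ω | ∀ i, s i < E (t i) ω}).toReal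
      = ∫ t in {t : Fin n → ℝ | ∀ i, 0 ≤ t i},
        Real.exp (-∑ i, lam i * t i) * (P {ω | ∀ i, D (s i) ω < t i}).toReal := by
    refine integral_congr_ae ?_
    filter_upwards [hfg] with t ht
    rw [ht]
  -- pass to a lintegral
  have hLHS2 : ∫ t in {t : Fin n → ℝ | ∀ i, 0 ≤ t i},
        Real.exp (-∑ i, lam i * t i) * (P {ω | ∀ i, D (s i) ω < t i}).toReal
      = (∫⁻ t in {t : Fin n → ℝ | ∀ i, 0 ≤ t i},
          ENNReal.ofReal (Real.exp (-∑ i, lam i * t i)) * P {ω | ∀ i, D (s i) ω < t i}).toReal := by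
    rw [integral_eq_lintegral_of_nonneg_ae
      (ae_of_all _ fun t => mul_nonneg (Real.exp_pos _).le ENNReal.toReal_nonneg)
      (hwm.mul hgm.ennreal_toReal).aestronglyMeasurable]
    congr 1
    refine lintegral_congr fun t => ?_
    rw [ENNReal.ofReal_mul (Real.exp_pos _).le, ENNReal.ofReal_toReal (measure_ne_top P _)]
  -- integrability of the exponential of D
  have hGm : Measurable (fun ω => Real.exp (-∑ i, lam i * D (s i) ω)) :=
    Real.measurable_exp.comp
      (Finset.measurable_sum Finset.univ fun i _ => ((hmeas (s i)).const_mul (lam i))).neg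
  have hGnn : ∀ ω, 0 ≤ Real.exp (-∑ i, lam i * D (s i) ω) := fun ω => (Real.exp_pos _).le
  have hGint : Integrable (fun ω => Real.exp (-∑ i, lam i * D (s i) ω)) P := by
    refine Integrable.mono' (integrable_const 1) hGm.aestronglyMeasurable ?_
    filter_upwards [hpath] with ω hω
    obtain ⟨_, hnn, _, _⟩ := hω
    have hle : -∑ i, lam i * D (s i) ω ≤ 0 :=
      neg_nonpos.2 (Finset.sum_nonneg fun i _ => mul_nonneg (hlam i).le (hnn (s i) (hs i)))
    rw [Real.norm_eq_abs, abs_of_pos (Real.exp_pos _)]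
    exact Real.exp_le_one_iff.2 hle
  -- the key lintegral computation
  have key : ∫⁻ t in {t : Fin n → ℝ | ∀ i, 0 ≤ t i},
        ENNReal.ofReal (Real.exp (-∑ i, lam i * t i)) * P {ω | ∀ i, D (s i) ω < t i}
      = ENNReal.ofReal ((∏ i, lam i)⁻¹ * ∫ ω, Real.exp (-∑ i, lam i * D (s i) ω) ∂P) := by
    have hindm : Measurable (fun p : (Fin n → ℝ) × Ω =>
        ({p : (Fin n → ℝ) × Ω | ∀ i, D (s i) p.2 < p.1 i}).indicator (fun _ => (1:ENNReal)) p) :=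
      measurable_one.indicator hPRm
    calc ∫⁻ t in {t : Fin n → ℝ | ∀ i, 0 ≤ t i},
          ENNReal.ofReal (Real.exp (-∑ i, lam i * t i)) * P {ω | ∀ i, D (s i) ω < t i}
        = ∫⁻ t in {t : Fin n → ℝ | ∀ i, 0 ≤ t i}, ∫⁻ ω,
            ENNReal.ofReal (Real.exp (-∑ i, lam i * t i)) *
            ({p : (Fin n → ℝ) × Ω | ∀ i, D (s i) p.2 < p.1 i}).indicator (fun _ => (1:ENNReal)) (t, ω) ∂P := by
          refine lintegral_congr fun t => ?_
          have h2 : ∫⁻ ω, ({p : (Fin n → ℝ) × Ω | ∀ i, D (s i) p.2 < p.1 i}).indicator (fun _ => (1:ENNReal)) (t, ω) ∂P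
              = P {ω | ∀ i, D (s i) ω < t i} := by
            have hrw : (fun ω => ({p : (Fin n → ℝ) × Ω | ∀ i, D (s i) p.2 < p.1 i}).indicator (fun _ => (1:ENNReal)) (t, ω))
                = (Prod.mk t ⁻¹' {p : (Fin n → ℝ) × Ω | ∀ i, D (s i) p.2 < p.1 i}).indicator (fun _ => (1:ENNReal)) := by
              rfl
            rw [hrw, lintegral_indicator (measurable_prodMk_left hPRm), setLIntegral_one]
            rfl
          have hm2 : Measurable (fun ω : Ω =>
              ({p : (Fin n → ℝ) × Ω | ∀ i, D (s i) p.2 < p.1 i}).indicator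
                (fun _ => (1:ENNReal)) (t, ω)) := hindm.comp measurable_prodMk_left
          rw [← h2, ← lintegral_const_mul _ hm2]
      _ = ∫⁻ ω, (∫⁻ t in {t : Fin n → ℝ | ∀ i, 0 ≤ t i},
            ENNReal.ofReal (Real.exp (-∑ i, lam i * t i)) *
            ({p : (Fin n → ℝ) × Ω | ∀ i, D (s i) p.2 < p.1 i}).indicator (fun _ => (1:ENNReal)) (t, ω)) ∂P := by
          refine lintegral_lintegral_swap ?_
          exact ((ENNReal.measurable_ofReal.comp (hwm.comp measurable_fst)).mul hindm).aemeasurable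
      _ = ∫⁻ ω, ENNReal.ofReal ((∏ i, lam i)⁻¹ * Real.exp (-∑ i, lam i * D (s i) ω)) ∂P := by
          refine lintegral_congr_ae ?_
          filter_upwards [hpath] with ω hω
          obtain ⟨_, hnn, _, _⟩ := hω
          have hc : ∀ i, 0 ≤ D (s i) ω := fun i => hnn (s i) (hs i)
          have hRm : MeasurableSet (Set.pi univ (fun i => Ioi (D (s i) ω))) :=
            MeasurableSet.univ_pi fun i => measurableSet_Ioi
          -- pointwise indicator identification
          have hpoint : (fun t : Fin n → ℝ =>
              ENNReal.ofReal (Real.exp (-∑ i, lam i * t i)) *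
              ({p : (Fin n → ℝ) × Ω | ∀ i, D (s i) p.2 < p.1 i}).indicator (fun _ => (1:ENNReal)) (t, ω))
            = fun t => (Set.pi univ (fun i => Ioi (D (s i) ω))).indicator
                (fun t : Fin n → ℝ => ENNReal.ofReal (Real.exp (-∑ i, lam i * t i))) t := by
            ext t
            by_cases h : ∀ i, D (s i) ω < t i
            · rw [Set.indicator_of_mem (by simpa [Set.mem_univ_pi] using h),
                Set.indicator_of_mem (by simpa using h)]
              simp
            · rw [Set.indicator_of_notMem (by simpa [Set.mem_univ_pi] using h),
                Set.indicator_of_notMem (by simpa using h)]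
              simp
          rw [hpoint, lintegral_indicator hRm, Measure.restrict_restrict hRm]
          have hRS : Set.pi univ (fun i => Ioi (D (s i) ω)) ∩ {t : Fin n → ℝ | ∀ i, 0 ≤ t i}
              = Set.pi univ (fun i => Ioi (D (s i) ω)) := by
            refine inter_eq_left.2 fun t ht i => ?_
            exact le_trans (hc i) (le_of_lt ((Set.mem_univ_pi).1 ht i))
          rw [hRS]
          -- the indicator-product representation of the integrand
          have hprodfun : (Set.pi univ (fun i => Ioi (D (s i) ω))).indicator
                (fun t : Fin n → ℝ => Real.exp (-∑ i, lam i * t i))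
              = fun t => ∏ i, (Ioi (D (s i) ω)).indicator
                  (fun x => Real.exp (-(lam i * x))) (t i) := by
            ext t
            by_cases ht : t ∈ Set.pi univ (fun i => Ioi (D (s i) ω))
            · have hti : ∀ i, D (s i) ω < t i := fun i => (Set.mem_univ_pi).1 ht i
              rw [Set.indicator_of_mem ht]
              have heach : ∀ i, (Ioi (D (s i) ω)).indicator
                  (fun x => Real.exp (-(lam i * x))) (t i) = Real.exp (-(lam i * t i)) :=
                fun i => Set.indicator_of_mem (hti i) _
              simp only [heach]
              rw [← Real.exp_sum]
              congr 1
              rw [← Finset.sum_neg_distrib]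
            · rw [Set.indicator_of_notMem ht]
              rw [Set.mem_univ_pi] at ht
              push_neg at ht
              obtain ⟨i, hi⟩ := ht
              refine (Finset.prod_eq_zero (Finset.mem_univ i) ?_).symm
              rw [Set.indicator_of_notMem hi]
          have hfint : ∀ i, Integrable ((Ioi (D (s i) ω)).indicator
              (fun x => Real.exp (-(lam i * x)))) := by
            intro i
            refine (integrable_indicator_iff measurableSet_Ioi).2 ?_
            have := exp_neg_integrableOn_Ioi (D (s i) ω) (hlam i)
            simpa [neg_mul] using this
          have hIntR : IntegrableOn (fun t : Fin n → ℝ => Real.exp (-∑ i, lam i * t i))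
              (Set.pi univ (fun i => Ioi (D (s i) ω))) := by
            rw [← integrable_indicator_iff hRm, hprodfun]
            exact Integrable.fintype_prod (𝕜 := ℝ) hfint
          rw [← MeasureTheory.ofReal_integral_eq_lintegral_ofReal hIntR
            (ae_of_all _ fun t => (Real.exp_pos _).le)]
          congr 1
          rw [← integral_indicator hRm, hprodfun,
            MeasureTheory.integral_fintype_prod_volume_eq_prod
              (fun i => (Ioi (D (s i) ω)).indicator (fun x => Real.exp (-(lam i * x))))]
          have heach : ∀ i, ∫ x, (Ioi (D (s i) ω)).indicator
              (fun x => Real.exp (-(lam i * x))) x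
              = (lam i)⁻¹ * Real.exp (-(lam i * D (s i) ω)) := by
            intro i
            rw [integral_indicator measurableSet_Ioi]
            exact aux_integral_exp_neg_mul_Ioi (hlam i) _
          rw [Finset.prod_congr rfl fun i _ => heach i, Finset.prod_mul_distrib,
            ← Finset.prod_inv_distrib, ← Real.exp_sum, ← Finset.sum_neg_distrib]
      _ = ENNReal.ofReal ((∏ i, lam i)⁻¹ * ∫ ω, Real.exp (-∑ i, lam i * D (s i) ω) ∂P) := by
          rw [← integral_const_mul]
          rw [MeasureTheory.ofReal_integral_eq_lintegral_ofReal (hGint.const_mul _)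
            (ae_of_all _ fun ω => mul_nonneg (inv_nonneg.2 (Finset.prod_nonneg
              fun i _ => (hlam i).le)) (hGnn ω))]
  rw [hLHS1, hLHS2, key, ENNReal.toReal_ofReal]
  exact mul_nonneg (inv_nonneg.2 (Finset.prod_nonneg fun i _ => (hlam i).le))
    (integral_nonneg hGnn)
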